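/- Let D₈ be the convex octagon in ℝ² with vertices (−1,3), (1,3), (2,1), (2,−1), (1,−3), (−1,−3), (−2,−1), (−2,1), and let Λ be the lattice generated by the vectors u₁ = (2,0) and u₂ = (3/2, 2), i.e. Λ = {z₁u₁ + z₂u₂ : z₁, z₂ ∈ ℤ}. Then D₈ + Λ is a five-fold translative tiling of the plane: every point of ℝ² belongs to at least 5 of the translates D₈ + λ (λ ∈ Λ), and every point of ℝ² belongs to at most 5 of the translates int(D₈) + λ. -/

import Mathlib

open Pointwise

/-- `K + X` is a `k`-fold translative tiling of the plane: the translate multiset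
`(x i)` is discrete, every point of the plane belongs to at least `k` of the translates
`K + x i`, and every point belongs to at most `k` of the translates `interior K + x i`
(multiplicity counted over the index set). -/
def IsKFoldTranslativeTiling {ι : Type} (K : Set (ℝ × ℝ)) (x : ι → ℝ × ℝ) (k : ℕ) : Prop :=
  (∀ R : ℝ, {i : ι | ‖x i‖ ≤ R}.Finite) ∧
  (∀ p : ℝ × ℝ, ∃ s : Finset ι, k ≤ s.card ∧ ∀ i ∈ s, p - x i ∈ K) ∧
  (∀ p : ℝ × ℝ, ∀ s : Finset ι, (∀ i ∈ s, p - x i ∈ interior K) → s.card ≤ k)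

/-- `P` is a (two-dimensional) convex polygon whose vertex set is the finite set `V`:
`P` is the convex hull of `V`, every element of `V` is an extreme point of `P`
(so `V` is exactly the vertex set), and `P` has nonempty interior. -/
def IsConvexPolygon (P : Set (ℝ × ℝ)) (V : Finset (ℝ × ℝ)) : Prop :=
  P = convexHull ℝ (V : Set (ℝ × ℝ)) ∧
  (∀ v ∈ V, v ∈ Set.extremePoints ℝ P) ∧
  (interior P).Nonempty

/-- `P` is symmetric about some point `c`. -/
def IsCentrallySymmetric (P : Set (ℝ × ℝ)) : Prop :=
  ∃ c : ℝ × ℝ, ∀ p ∈ P, 2 • c - p ∈ P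

/-- The segment `[a, b]` is an edge of the convex polygon `P` with vertex set `V`. -/
def IsEdge (P : Set (ℝ × ℝ)) (V : Finset (ℝ × ℝ)) (a b : ℝ × ℝ) : Prop :=
  a ∈ V ∧ b ∈ V ∧ a ≠ b ∧ segment ℝ a b ⊆ frontier P



open Pointwise

local notation "V8" => ({((-1 : ℝ), (3 : ℝ)), (1, 3), (2, 1), (2, -1),
        (1, -3), (-1, -3), (-2, -1), (-2, 1)} : Set (ℝ × ℝ))

lemma hull_sub : convexHull ℝ V8 ⊆
    {p : ℝ × ℝ | -2 ≤ p.1 ∧ p.1 ≤ 2 ∧ -3 ≤ p.2 ∧ p.2 ≤ 3 ∧ -5 ≤ 2*p.1+p.2 ∧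
      2*p.1+p.2 ≤ 5 ∧ -5 ≤ 2*p.1-p.2 ∧ 2*p.1-p.2 ≤ 5} := by
  apply convexHull_min
  · intro p hp
    simp only [Set.mem_insert_iff, Set.mem_singleton_iff] at hp
    rcases hp with rfl|rfl|rfl|rfl|rfl|rfl|rfl|rfl <;> norm_num
  · intro p hp q hq α β hα hβ hαβ
    simp only [Set.mem_setOf_eq] at hp hq ⊢
    obtain ⟨p1,p2,p3,p4,p5,p6,p7,p8⟩ := hp
    obtain ⟨q1,q2,q3,q4,q5,q6,q7,q8⟩ := hq
    have e1 : (α • p + β • q).1 = α * p.1 + β * q.1 := by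
      simp [Prod.fst_add, Prod.smul_fst, smul_eq_mul]
    have e2 : (α • p + β • q).2 = α * p.2 + β * q.2 := by
      simp [Prod.snd_add, Prod.smul_snd, smul_eq_mul]
    rw [e1, e2]
    refine ⟨?_,?_,?_,?_,?_,?_,?_,?_⟩
    · linarith [mul_nonneg hα (by linarith : (0:ℝ) ≤ p.1 + 2), mul_nonneg hβ (by linarith : (0:ℝ) ≤ q.1 + 2)]
    · linarith [mul_nonneg hα (by linarith : (0:ℝ) ≤ 2 - p.1), mul_nonneg hβ (by linarith : (0:ℝ) ≤ 2 - q.1)]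
    · linarith [mul_nonneg hα (by linarith : (0:ℝ) ≤ p.2 + 3), mul_nonneg hβ (by linarith : (0:ℝ) ≤ q.2 + 3)]
    · linarith [mul_nonneg hα (by linarith : (0:ℝ) ≤ 3 - p.2), mul_nonneg hβ (by linarith : (0:ℝ) ≤ 3 - q.2)]
    · linarith [mul_nonneg hα (by linarith : (0:ℝ) ≤ 2*p.1+p.2 + 5), mul_nonneg hβ (by linarith : (0:ℝ) ≤ 2*q.1+q.2 + 5)]
    · linarith [mul_nonneg hα (by linarith : (0:ℝ) ≤ 5 - (2*p.1+p.2)), mul_nonneg hβ (by linarith : (0:ℝ) ≤ 5 - (2*q.1+q.2))]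
    · linarith [mul_nonneg hα (by linarith : (0:ℝ) ≤ 2*p.1-p.2 + 5), mul_nonneg hβ (by linarith : (0:ℝ) ≤ 2*q.1-q.2 + 5)]
    · linarith [mul_nonneg hα (by linarith : (0:ℝ) ≤ 5 - (2*p.1-p.2)), mul_nonneg hβ (by linarith : (0:ℝ) ≤ 5 - (2*q.1-q.2))]

lemma hull_conds {u v : ℝ} (h : ((u, v) : ℝ × ℝ) ∈ convexHull ℝ V8) :
    -2 ≤ u ∧ u ≤ 2 ∧ -3 ≤ v ∧ v ≤ 3 ∧ -5 ≤ 2*u+v ∧ 2*u+v ≤ 5 ∧ -5 ≤ 2*u-v ∧ 2*u-v ≤ 5 :=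
  hull_sub h

-- point on a segment, coordinate form
lemma seg_pt {a1 a2 b1 b2 t : ℝ} (h0 : 0 ≤ t) (h1 : t ≤ 1) :
    (((1-t)*a1 + t*b1, (1-t)*a2 + t*b2) : ℝ × ℝ) ∈ segment ℝ ((a1, a2) : ℝ × ℝ) ((b1, b2) : ℝ × ℝ) := by
  refine ⟨1-t, t, by linarith, h0, by ring, ?_⟩
  simp only [Prod.smul_mk, Prod.mk_add_mk, smul_eq_mul]

lemma mem_V8 : ((-1,3) : ℝ×ℝ) ∈ V8 ∧ ((1,3) : ℝ×ℝ) ∈ V8 ∧ ((2,1) : ℝ×ℝ) ∈ V8 ∧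
    ((2,-1) : ℝ×ℝ) ∈ V8 ∧ ((1,-3) : ℝ×ℝ) ∈ V8 ∧ ((-1,-3) : ℝ×ℝ) ∈ V8 ∧
    ((-2,-1) : ℝ×ℝ) ∈ V8 ∧ ((-2,1) : ℝ×ℝ) ∈ V8 := by
  refine ⟨?_,?_,?_,?_,?_,?_,?_,?_⟩ <;> simp [Set.mem_insert_iff]

lemma sub_hull {u v : ℝ} (h1 : -2 ≤ u) (h2 : u ≤ 2) (h3 : -3 ≤ v) (h4 : v ≤ 3)
    (h5 : -5 ≤ 2*u+v) (h6 : 2*u+v ≤ 5) (h7 : -5 ≤ 2*u-v) (h8 : 2*u-v ≤ 5) :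
    ((u, v) : ℝ × ℝ) ∈ convexHull ℝ V8 := by
  obtain ⟨w1,w2,w3,w4,w5,w6,w7,w8⟩ := mem_V8
  have hconv := convex_convexHull ℝ V8
  rcases le_total u (-1) with hu | hu
  · -- left trapezoid: between B = (u, -5-2u) on [(-2,-1),(-1,-3)] and T = (u, 5+2u) on [(-2,1),(-1,3)]
    have hden : (0:ℝ) < 10 + 4*u := by linarith
    have hT : ((u, 5+2*u) : ℝ×ℝ) ∈ segment ℝ ((-2,1) : ℝ×ℝ) ((-1,3) : ℝ×ℝ) := by
      have := seg_pt (a1 := -2) (a2 := 1) (b1 := -1) (b2 := 3) (t := u + 2)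
        (by linarith) (by linarith)
      convert this using 2 <;> ring
    have hB : ((u, -5-2*u) : ℝ×ℝ) ∈ segment ℝ ((-2,-1) : ℝ×ℝ) ((-1,-3) : ℝ×ℝ) := by
      have := seg_pt (a1 := -2) (a2 := -1) (b1 := -1) (b2 := -3) (t := u + 2)
        (by linarith) (by linarith)
      convert this using 2 <;> ring
    have hTm := segment_subset_convexHull w8 w1 hT
    have hBm := segment_subset_convexHull w7 w6 hB
    apply hconv.segment_subset hBm hTm
    have := seg_pt (a1 := u) (a2 := -5-2*u) (b1 := u) (b2 := 5+2*u)
      (t := (v + 5 + 2*u)/(10+4*u)) (div_nonneg (by linarith) (by linarith))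
      ((div_le_one hden).mpr (by linarith))
    convert this using 2
    · ring
    · linear_combination (-1 : ℝ) * (div_mul_cancel₀ (v + 5 + 2*u) hden.ne')
  · rcases le_total u 1 with hu1 | hu1
    · -- middle rectangle
      have hL : ((-1, v) : ℝ×ℝ) ∈ segment ℝ ((-1,-3) : ℝ×ℝ) ((-1,3) : ℝ×ℝ) := by
        have := seg_pt (a1 := -1) (a2 := -3) (b1 := -1) (b2 := 3) (t := (v+3)/6)
          (by linarith) (by linarith)
        convert this using 2
        · ring
        · field_simp; ring
      have hR : ((1, v) : ℝ×ℝ) ∈ segment ℝ ((1,-3) : ℝ×ℝ) ((1,3) : ℝ×ℝ) := by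
        have := seg_pt (a1 := 1) (a2 := -3) (b1 := 1) (b2 := 3) (t := (v+3)/6)
          (by linarith) (by linarith)
        convert this using 2
        · ring
        · field_simp; ring
      have hLm := segment_subset_convexHull w6 w1 hL
      have hRm := segment_subset_convexHull w5 w2 hR
      apply hconv.segment_subset hLm hRm
      have := seg_pt (a1 := -1) (a2 := v) (b1 := 1) (b2 := v) (t := (u+1)/2)
        (by linarith) (by linarith)
      convert this using 2
      · field_simp; ring
      · ring
    · -- right trapezoid
      have hden : (0:ℝ) < 10 - 4*u := by linarith
      have hT : ((u, 5-2*u) : ℝ×ℝ) ∈ segment ℝ ((1,3) : ℝ×ℝ) ((2,1) : ℝ×ℝ) := by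
        have := seg_pt (a1 := 1) (a2 := 3) (b1 := 2) (b2 := 1) (t := u - 1)
          (by linarith) (by linarith)
        convert this using 2 <;> ring
      have hB : ((u, 2*u-5) : ℝ×ℝ) ∈ segment ℝ ((1,-3) : ℝ×ℝ) ((2,-1) : ℝ×ℝ) := by
        have := seg_pt (a1 := 1) (a2 := -3) (b1 := 2) (b2 := -1) (t := u - 1)
          (by linarith) (by linarith)
        convert this using 2 <;> ring
      have hTm := segment_subset_convexHull w2 w3 hT
      have hBm := segment_subset_convexHull w5 w4 hB
      apply hconv.segment_subset hBm hTm
      have := seg_pt (a1 := u) (a2 := 2*u-5) (b1 := u) (b2 := 5-2*u)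
        (t := (v - 2*u + 5)/(10-4*u)) (div_nonneg (by linarith) (by linarith))
        ((div_le_one hden).mpr (by linarith))
      convert this using 2
      · ring
      · linear_combination (-1 : ℝ) * (div_mul_cancel₀ (v - 2*u + 5) hden.ne')

lemma interior_strict {u v : ℝ} (h : ((u, v) : ℝ × ℝ) ∈ interior (convexHull ℝ V8)) :
    -2 < u ∧ u < 2 ∧ -3 < v ∧ v < 3 ∧ -5 < 2*u+v ∧ 2*u+v < 5 ∧ -5 < 2*u-v ∧ 2*u-v < 5 := by
  rw [mem_interior_iff_mem_nhds, Metric.mem_nhds_iff] at h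
  obtain ⟨ε, hε, hball⟩ := h
  have hpt : ∀ d1 d2 : ℝ, |d1| < ε → |d2| < ε → ((u + d1, v + d2) : ℝ × ℝ) ∈ convexHull ℝ V8 := by
    intro d1 d2 hd1 hd2
    apply hball
    rw [Metric.mem_ball, Prod.dist_eq]
    apply max_lt
    · rw [Real.dist_eq]
      simpa using hd1
    · rw [Real.dist_eq]
      simpa using hd2
  have habs : |ε/2| < ε := by rw [abs_of_pos (by linarith)]; linarith
  have habs' : |(-(ε/2) : ℝ)| < ε := by rw [abs_neg]; exact habs
  have h0 : |(0:ℝ)| < ε := by simpa using hε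
  have hA := hull_conds (hpt (ε/2) 0 habs h0)
  have hB := hull_conds (hpt (-(ε/2)) 0 habs' h0)
  have hC := hull_conds (hpt 0 (ε/2) h0 habs)
  have hD := hull_conds (hpt 0 (-(ε/2)) h0 habs')
  obtain ⟨a1,a2,a3,a4,a5,a6,a7,a8⟩ := hA
  obtain ⟨b1,b2,b3,b4,b5,b6,b7,b8⟩ := hB
  obtain ⟨c1,c2,c3,c4,c5,c6,c7,c8⟩ := hC
  obtain ⟨d1,d2,d3,d4,d5,d6,d7,d8⟩ := hD
  refine ⟨by linarith, by linarith, by linarith, by linarith, by linarith, by linarith, by linarith, by linarith⟩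


lemma boxbound {x y : ℝ} {a b : ℤ} (hx0 : 0 ≤ x) (hx2 : x ≤ 2) (hy0 : 0 ≤ y) (hy2 : y ≤ 2)
    (m1 : -2 < x - (2*(a:ℝ) + 3/2*(b:ℝ))) (m2 : x - (2*(a:ℝ) + 3/2*(b:ℝ)) < 2)
    (m3 : -3 < y - 2*(b:ℝ)) (m4 : y - 2*(b:ℝ) < 3) :
    -2 ≤ a ∧ a ≤ 2 ∧ -1 ≤ b ∧ b ≤ 2 := by
  have hb1 : (-2 : ℝ) < (b : ℝ) := by linarith
  have hb2 : (b : ℝ) < (3 : ℝ) := by linarith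
  have hb1' : (-2 : ℤ) < b := by exact_mod_cast hb1
  have hb2' : b < (3 : ℤ) := by exact_mod_cast hb2
  have hbl : (-1 : ℝ) ≤ (b : ℝ) := by exact_mod_cast (by omega : (-1 : ℤ) ≤ b)
  have hbu : (b : ℝ) ≤ (2 : ℝ) := by exact_mod_cast (by omega : b ≤ (2 : ℤ))
  have ha1 : (-3 : ℝ) < (a : ℝ) := by linarith
  have ha2 : (a : ℝ) < (3 : ℝ) := by linarith
  have ha1' : (-3 : ℤ) < a := by exact_mod_cast ha1
  have ha2' : a < (3 : ℤ) := by exact_mod_cast ha2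
  omega


set_option maxHeartbeats 4000000 in
lemma keycell (x y : ℝ) (hx0 : 0 ≤ x) (hx2 : x ≤ 2) (hy0 : 0 ≤ y) (hy2 : y ≤ 2) :
    ∃ s : Finset (ℤ × ℤ), s.card = 5 ∧
      (∀ a b : ℤ, (a, b) ∈ s →
        (-2 ≤ x - (2*(a:ℝ) + 3/2*(b:ℝ)) ∧ x - (2*(a:ℝ) + 3/2*(b:ℝ)) ≤ 2 ∧
         -3 ≤ y - 2*(b:ℝ) ∧ y - 2*(b:ℝ) ≤ 3 ∧
         -5 ≤ 2*(x - (2*(a:ℝ) + 3/2*(b:ℝ))) + (y - 2*(b:ℝ)) ∧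
         2*(x - (2*(a:ℝ) + 3/2*(b:ℝ))) + (y - 2*(b:ℝ)) ≤ 5 ∧
         -5 ≤ 2*(x - (2*(a:ℝ) + 3/2*(b:ℝ))) - (y - 2*(b:ℝ)) ∧
         2*(x - (2*(a:ℝ) + 3/2*(b:ℝ))) - (y - 2*(b:ℝ)) ≤ 5)) ∧
      (∀ a b : ℤ, (a, b) ∉ s →
        ¬(-2 < x - (2*(a:ℝ) + 3/2*(b:ℝ)) ∧ x - (2*(a:ℝ) + 3/2*(b:ℝ)) < 2 ∧
          -3 < y - 2*(b:ℝ) ∧ y - 2*(b:ℝ) < 3 ∧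
          -5 < 2*(x - (2*(a:ℝ) + 3/2*(b:ℝ))) + (y - 2*(b:ℝ)) ∧
          2*(x - (2*(a:ℝ) + 3/2*(b:ℝ))) + (y - 2*(b:ℝ)) < 5 ∧
          -5 < 2*(x - (2*(a:ℝ) + 3/2*(b:ℝ))) - (y - 2*(b:ℝ)) ∧
          2*(x - (2*(a:ℝ) + 3/2*(b:ℝ))) - (y - 2*(b:ℝ)) < 5)) := by
  rcases le_total (x) (1 : ℝ) with h0 | h0
  · -- x ≤ 1
    rcases le_total (y) (1 : ℝ) with h1 | h1
    · -- y ≤ 1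
      refine ⟨({((-1 : ℤ), (1 : ℤ)), ((0 : ℤ), (0 : ℤ)), ((0 : ℤ), (1 : ℤ)), ((1 : ℤ), (-1 : ℤ)), ((1 : ℤ), (0 : ℤ))} : Finset (ℤ × ℤ)), by decide, ?_, ?_⟩
      · intro a b hab
        simp only [Finset.mem_insert, Finset.mem_singleton, Prod.mk.injEq] at hab
        rcases hab with ⟨rfl, rfl⟩|⟨rfl, rfl⟩|⟨rfl, rfl⟩|⟨rfl, rfl⟩|⟨rfl, rfl⟩ <;> push_cast <;>
          exact ⟨by linarith, by linarith, by linarith, by linarith, by linarith, by linarith, by linarith, by linarith⟩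
      · intro a b hab hmem
        obtain ⟨m1, m2, m3, m4, m5, m6, m7, m8⟩ := hmem
        obtain ⟨ha1, ha2, hb1, hb2⟩ := boxbound hx0 hx2 hy0 hy2 m1 m2 m3 m4
        interval_cases a <;> interval_cases b <;>
          first
            | exact hab (by decide)
            | (push_cast at m1 m2 m3 m4 m5 m6 m7 m8; linarith)
    · -- y ≥ 1
      rcases le_total (2*x-y) (-1 : ℝ) with h2 | h2
      · -- 2*x-y ≤ -1
        refine ⟨({((-2 : ℤ), (2 : ℤ)), ((-1 : ℤ), (1 : ℤ)), ((-1 : ℤ), (2 : ℤ)), ((0 : ℤ), (0 : ℤ)), ((0 : ℤ), (1 : ℤ))} : Finset (ℤ × ℤ)), by decide, ?_, ?_⟩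
        · intro a b hab
          simp only [Finset.mem_insert, Finset.mem_singleton, Prod.mk.injEq] at hab
          rcases hab with ⟨rfl, rfl⟩|⟨rfl, rfl⟩|⟨rfl, rfl⟩|⟨rfl, rfl⟩|⟨rfl, rfl⟩ <;> push_cast <;>
            exact ⟨by linarith, by linarith, by linarith, by linarith, by linarith, by linarith, by linarith, by linarith⟩
        · intro a b hab hmem
          obtain ⟨m1, m2, m3, m4, m5, m6, m7, m8⟩ := hmem
          obtain ⟨ha1, ha2, hb1, hb2⟩ := boxbound hx0 hx2 hy0 hy2 m1 m2 m3 m4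
          interval_cases a <;> interval_cases b <;>
            first
              | exact hab (by decide)
              | (push_cast at m1 m2 m3 m4 m5 m6 m7 m8; linarith)
      · -- 2*x-y ≥ -1
        refine ⟨({((-1 : ℤ), (1 : ℤ)), ((-1 : ℤ), (2 : ℤ)), ((0 : ℤ), (0 : ℤ)), ((0 : ℤ), (1 : ℤ)), ((1 : ℤ), (0 : ℤ))} : Finset (ℤ × ℤ)), by decide, ?_, ?_⟩
        · intro a b hab
          simp only [Finset.mem_insert, Finset.mem_singleton, Prod.mk.injEq] at hab
          rcases hab with ⟨rfl, rfl⟩|⟨rfl, rfl⟩|⟨rfl, rfl⟩|⟨rfl, rfl⟩|⟨rfl, rfl⟩ <;> push_cast <;>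
            exact ⟨by linarith, by linarith, by linarith, by linarith, by linarith, by linarith, by linarith, by linarith⟩
        · intro a b hab hmem
          obtain ⟨m1, m2, m3, m4, m5, m6, m7, m8⟩ := hmem
          obtain ⟨ha1, ha2, hb1, hb2⟩ := boxbound hx0 hx2 hy0 hy2 m1 m2 m3 m4
          interval_cases a <;> interval_cases b <;>
            first
              | exact hab (by decide)
              | (push_cast at m1 m2 m3 m4 m5 m6 m7 m8; linarith)
  · -- x ≥ 1
    rcases le_total (x) (3/2 : ℝ) with h1 | h1
    · -- x ≤ 3/2
      rcases le_total (2*x-y) (2 : ℝ) with h2 | h2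
      · -- 2*x-y ≤ 2
        rcases le_total (y) (1 : ℝ) with h3 | h3
        · -- y ≤ 1
          refine ⟨({((-1 : ℤ), (1 : ℤ)), ((0 : ℤ), (0 : ℤ)), ((0 : ℤ), (1 : ℤ)), ((1 : ℤ), (-1 : ℤ)), ((1 : ℤ), (0 : ℤ))} : Finset (ℤ × ℤ)), by decide, ?_, ?_⟩
          · intro a b hab
            simp only [Finset.mem_insert, Finset.mem_singleton, Prod.mk.injEq] at hab
            rcases hab with ⟨rfl, rfl⟩|⟨rfl, rfl⟩|⟨rfl, rfl⟩|⟨rfl, rfl⟩|⟨rfl, rfl⟩ <;> push_cast <;>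
              exact ⟨by linarith, by linarith, by linarith, by linarith, by linarith, by linarith, by linarith, by linarith⟩
          · intro a b hab hmem
            obtain ⟨m1, m2, m3, m4, m5, m6, m7, m8⟩ := hmem
            obtain ⟨ha1, ha2, hb1, hb2⟩ := boxbound hx0 hx2 hy0 hy2 m1 m2 m3 m4
            interval_cases a <;> interval_cases b <;>
              first
                | exact hab (by decide)
                | (push_cast at m1 m2 m3 m4 m5 m6 m7 m8; linarith)
        · -- y ≥ 1
          refine ⟨({((-1 : ℤ), (1 : ℤ)), ((-1 : ℤ), (2 : ℤ)), ((0 : ℤ), (0 : ℤ)), ((0 : ℤ), (1 : ℤ)), ((1 : ℤ), (0 : ℤ))} : Finset (ℤ × ℤ)), by decide, ?_, ?_⟩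
          · intro a b hab
            simp only [Finset.mem_insert, Finset.mem_singleton, Prod.mk.injEq] at hab
            rcases hab with ⟨rfl, rfl⟩|⟨rfl, rfl⟩|⟨rfl, rfl⟩|⟨rfl, rfl⟩|⟨rfl, rfl⟩ <;> push_cast <;>
              exact ⟨by linarith, by linarith, by linarith, by linarith, by linarith, by linarith, by linarith, by linarith⟩
          · intro a b hab hmem
            obtain ⟨m1, m2, m3, m4, m5, m6, m7, m8⟩ := hmem
            obtain ⟨ha1, ha2, hb1, hb2⟩ := boxbound hx0 hx2 hy0 hy2 m1 m2 m3 m4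
            interval_cases a <;> interval_cases b <;>
              first
                | exact hab (by decide)
                | (push_cast at m1 m2 m3 m4 m5 m6 m7 m8; linarith)
      · -- 2*x-y ≥ 2
        refine ⟨({((0 : ℤ), (0 : ℤ)), ((0 : ℤ), (1 : ℤ)), ((1 : ℤ), (-1 : ℤ)), ((1 : ℤ), (0 : ℤ)), ((2 : ℤ), (-1 : ℤ))} : Finset (ℤ × ℤ)), by decide, ?_, ?_⟩
        · intro a b hab
          simp only [Finset.mem_insert, Finset.mem_singleton, Prod.mk.injEq] at hab
          rcases hab with ⟨rfl, rfl⟩|⟨rfl, rfl⟩|⟨rfl, rfl⟩|⟨rfl, rfl⟩|⟨rfl, rfl⟩ <;> push_cast <;>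
            exact ⟨by linarith, by linarith, by linarith, by linarith, by linarith, by linarith, by linarith, by linarith⟩
        · intro a b hab hmem
          obtain ⟨m1, m2, m3, m4, m5, m6, m7, m8⟩ := hmem
          obtain ⟨ha1, ha2, hb1, hb2⟩ := boxbound hx0 hx2 hy0 hy2 m1 m2 m3 m4
          interval_cases a <;> interval_cases b <;>
            first
              | exact hab (by decide)
              | (push_cast at m1 m2 m3 m4 m5 m6 m7 m8; linarith)
    · -- x ≥ 3/2
      rcases le_total (y) (1 : ℝ) with h2 | h2
      · -- y ≤ 1
        rcases le_total (2*x+y) (4 : ℝ) with h3 | h3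
        · -- 2*x+y ≤ 4
          refine ⟨({((0 : ℤ), (0 : ℤ)), ((0 : ℤ), (1 : ℤ)), ((1 : ℤ), (-1 : ℤ)), ((1 : ℤ), (0 : ℤ)), ((2 : ℤ), (-1 : ℤ))} : Finset (ℤ × ℤ)), by decide, ?_, ?_⟩
          · intro a b hab
            simp only [Finset.mem_insert, Finset.mem_singleton, Prod.mk.injEq] at hab
            rcases hab with ⟨rfl, rfl⟩|⟨rfl, rfl⟩|⟨rfl, rfl⟩|⟨rfl, rfl⟩|⟨rfl, rfl⟩ <;> push_cast <;>
              exact ⟨by linarith, by linarith, by linarith, by linarith, by linarith, by linarith, by linarith, by linarith⟩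
          · intro a b hab hmem
            obtain ⟨m1, m2, m3, m4, m5, m6, m7, m8⟩ := hmem
            obtain ⟨ha1, ha2, hb1, hb2⟩ := boxbound hx0 hx2 hy0 hy2 m1 m2 m3 m4
            interval_cases a <;> interval_cases b <;>
              first
                | exact hab (by decide)
                | (push_cast at m1 m2 m3 m4 m5 m6 m7 m8; linarith)
        · -- 2*x+y ≥ 4
          refine ⟨({((0 : ℤ), (0 : ℤ)), ((0 : ℤ), (1 : ℤ)), ((1 : ℤ), (0 : ℤ)), ((1 : ℤ), (1 : ℤ)), ((2 : ℤ), (-1 : ℤ))} : Finset (ℤ × ℤ)), by decide, ?_, ?_⟩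
          · intro a b hab
            simp only [Finset.mem_insert, Finset.mem_singleton, Prod.mk.injEq] at hab
            rcases hab with ⟨rfl, rfl⟩|⟨rfl, rfl⟩|⟨rfl, rfl⟩|⟨rfl, rfl⟩|⟨rfl, rfl⟩ <;> push_cast <;>
              exact ⟨by linarith, by linarith, by linarith, by linarith, by linarith, by linarith, by linarith, by linarith⟩
          · intro a b hab hmem
            obtain ⟨m1, m2, m3, m4, m5, m6, m7, m8⟩ := hmem
            obtain ⟨ha1, ha2, hb1, hb2⟩ := boxbound hx0 hx2 hy0 hy2 m1 m2 m3 m4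
            interval_cases a <;> interval_cases b <;>
              first
                | exact hab (by decide)
                | (push_cast at m1 m2 m3 m4 m5 m6 m7 m8; linarith)
      · -- y ≥ 1
        rcases le_total (2*x+y) (5 : ℝ) with h3 | h3
        · -- 2*x+y ≤ 5
          refine ⟨({((-1 : ℤ), (2 : ℤ)), ((0 : ℤ), (0 : ℤ)), ((0 : ℤ), (1 : ℤ)), ((1 : ℤ), (0 : ℤ)), ((1 : ℤ), (1 : ℤ))} : Finset (ℤ × ℤ)), by decide, ?_, ?_⟩
          · intro a b hab
            simp only [Finset.mem_insert, Finset.mem_singleton, Prod.mk.injEq] at hab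
            rcases hab with ⟨rfl, rfl⟩|⟨rfl, rfl⟩|⟨rfl, rfl⟩|⟨rfl, rfl⟩|⟨rfl, rfl⟩ <;> push_cast <;>
              exact ⟨by linarith, by linarith, by linarith, by linarith, by linarith, by linarith, by linarith, by linarith⟩
          · intro a b hab hmem
            obtain ⟨m1, m2, m3, m4, m5, m6, m7, m8⟩ := hmem
            obtain ⟨ha1, ha2, hb1, hb2⟩ := boxbound hx0 hx2 hy0 hy2 m1 m2 m3 m4
            interval_cases a <;> interval_cases b <;>
              first
                | exact hab (by decide)
                | (push_cast at m1 m2 m3 m4 m5 m6 m7 m8; linarith)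
        · -- 2*x+y ≥ 5
          refine ⟨({((-1 : ℤ), (2 : ℤ)), ((0 : ℤ), (1 : ℤ)), ((0 : ℤ), (2 : ℤ)), ((1 : ℤ), (0 : ℤ)), ((1 : ℤ), (1 : ℤ))} : Finset (ℤ × ℤ)), by decide, ?_, ?_⟩
          · intro a b hab
            simp only [Finset.mem_insert, Finset.mem_singleton, Prod.mk.injEq] at hab
            rcases hab with ⟨rfl, rfl⟩|⟨rfl, rfl⟩|⟨rfl, rfl⟩|⟨rfl, rfl⟩|⟨rfl, rfl⟩ <;> push_cast <;>
              exact ⟨by linarith, by linarith, by linarith, by linarith, by linarith, by linarith, by linarith, by linarith⟩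
          · intro a b hab hmem
            obtain ⟨m1, m2, m3, m4, m5, m6, m7, m8⟩ := hmem
            obtain ⟨ha1, ha2, hb1, hb2⟩ := boxbound hx0 hx2 hy0 hy2 m1 m2 m3 m4
            interval_cases a <;> interval_cases b <;>
              first
                | exact hab (by decide)
                | (push_cast at m1 m2 m3 m4 m5 m6 m7 m8; linarith)

lemma shift_inj (n m : ℤ) : Function.Injective (fun z : ℤ × ℤ => (z.1 + n, z.2 + m)) := by
  rintro ⟨a1, b1⟩ ⟨a2, b2⟩ h
  simp only [Prod.mk.injEq] at h
  exact Prod.ext_iff.mpr ⟨by omega, by omega⟩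

lemma cell_reduce (p : ℝ × ℝ) :
    ∃ (m n : ℤ) (x y : ℝ), 0 ≤ x ∧ x ≤ 2 ∧ 0 ≤ y ∧ y ≤ 2 ∧
      ∀ a b : ℤ,
        p - ((fun z : ℤ × ℤ =>
          (z.1 : ℝ) • (((2 : ℝ), (0 : ℝ)) : ℝ × ℝ) +
          (z.2 : ℝ) • (((3 / 2 : ℝ), (2 : ℝ)) : ℝ × ℝ)) ((a + n, b + m) : ℤ × ℤ))
          = ((x - (2*(a:ℝ) + 3/2*(b:ℝ)), y - 2*(b:ℝ)) : ℝ × ℝ) := by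
  set m : ℤ := ⌊p.2 / 2⌋ with hm
  set n : ℤ := ⌊(p.1 - 3/2*(m:ℝ)) / 2⌋ with hn
  have hm1 : (m : ℝ) ≤ p.2 / 2 := Int.floor_le _
  have hm2 : p.2 / 2 < (m : ℝ) + 1 := Int.lt_floor_add_one _
  have hn1 : (n : ℝ) ≤ (p.1 - 3/2*(m:ℝ)) / 2 := Int.floor_le _
  have hn2 : (p.1 - 3/2*(m:ℝ)) / 2 < (n : ℝ) + 1 := Int.lt_floor_add_one _
  refine ⟨m, n, p.1 - 3/2*(m:ℝ) - 2*(n:ℝ), p.2 - 2*(m:ℝ),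
    by linarith, by linarith, by linarith, by linarith, ?_⟩
  intro a b
  dsimp only
  rw [Prod.smul_mk, Prod.smul_mk, Prod.mk_add_mk, smul_eq_mul, smul_eq_mul,
    smul_eq_mul, smul_eq_mul]
  refine Prod.ext_iff.mpr ⟨?_, ?_⟩
  · show p.1 - ((((a + n : ℤ)) : ℝ) * 2 + (((b + m : ℤ)) : ℝ) * (3/2)) = _
    push_cast
    ring
  · show p.2 - ((((a + n : ℤ)) : ℝ) * 0 + (((b + m : ℤ)) : ℝ) * 2) = _
    push_cast
    ring

/-- Let `D₈` be the octagon with vertices `(±1, ±3)`, `(±2, ±1)` and let `Λ` be the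
lattice generated by `u₁ = (2,0)` and `u₂ = (3/2, 2)`. Then `D₈ + Λ` is a five-fold
translative tiling of the plane. -/
theorem octagon_fivefold_lattice_tiling :
    IsKFoldTranslativeTiling
      (convexHull ℝ ({((-1 : ℝ), (3 : ℝ)), (1, 3), (2, 1), (2, -1),
        (1, -3), (-1, -3), (-2, -1), (-2, 1)} : Set (ℝ × ℝ)))
      (fun z : ℤ × ℤ =>
        (z.1 : ℝ) • (((2 : ℝ), (0 : ℝ)) : ℝ × ℝ) +
        (z.2 : ℝ) • (((3 / 2 : ℝ), (2 : ℝ)) : ℝ × ℝ)) 5 := by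
  classical
  refine ⟨?_, ?_, ?_⟩
  · -- discreteness
    intro R
    apply Set.Finite.subset (((Set.finite_Icc (-⌈R⌉) ⌈R⌉).prod (Set.finite_Icc (-⌈R⌉) ⌈R⌉)))
    rintro ⟨z1, z2⟩ hz
    simp only [Set.mem_setOf_eq] at hz
    have e : ((z1 : ℝ) • (((2 : ℝ), (0 : ℝ)) : ℝ × ℝ) + (z2 : ℝ) • (((3/2 : ℝ), (2 : ℝ)) : ℝ × ℝ))
        = ((2*(z1:ℝ) + 3/2*(z2:ℝ), 2*(z2:ℝ)) : ℝ × ℝ) := by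
      simp only [Prod.smul_mk, Prod.mk_add_mk, smul_eq_mul, Prod.mk.injEq]
      constructor <;> ring
    rw [e, Prod.norm_def] at hz
    have h1 : ‖(2*(z1:ℝ) + 3/2*(z2:ℝ))‖ ≤ R := le_trans (le_max_left _ _) hz
    have h2 : ‖(2*(z2:ℝ))‖ ≤ R := le_trans (le_max_right _ _) hz
    rw [Real.norm_eq_abs, abs_le] at h1 h2
    have hR : 0 ≤ R := by linarith [h2.1, h2.2]
    have hz2u : (z2 : ℝ) ≤ R := by linarith [h2.2]
    have hz2l : -R ≤ (z2 : ℝ) := by linarith [h2.1]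
    have hz1u : (z1 : ℝ) ≤ R := by linarith [h1.2]
    have hz1l : -R ≤ (z1 : ℝ) := by linarith [h1.1]
    have hceil : R ≤ (⌈R⌉ : ℝ) := Int.le_ceil R
    constructor
    · constructor
      · exact_mod_cast (by linarith : (-(⌈R⌉:ℝ)) ≤ (z1:ℝ))
      · exact_mod_cast (by linarith : (z1:ℝ) ≤ (⌈R⌉:ℝ))
    · constructor
      · exact_mod_cast (by linarith : (-(⌈R⌉:ℝ)) ≤ (z2:ℝ))
      · exact_mod_cast (by linarith : (z2:ℝ) ≤ (⌈R⌉:ℝ))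
  · -- covering: at least 5
    intro p
    obtain ⟨m, n, x, y, hx0, hx2, hy0, hy2, hE⟩ := cell_reduce p
    obtain ⟨s, hcard, hmem, -⟩ := keycell x y hx0 hx2 hy0 hy2
    refine ⟨s.image (fun z => (z.1 + n, z.2 + m)), ?_, ?_⟩
    · rw [Finset.card_image_of_injective _ (shift_inj n m), hcard]
    · intro i hi
      simp only [Finset.mem_image] at hi
      obtain ⟨z, hzs, rfl⟩ := hi
      obtain ⟨a, b⟩ := z
      obtain ⟨c1,c2,c3,c4,c5,c6,c7,c8⟩ := hmem a b hzs
      rw [hE a b]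
      exact sub_hull c1 c2 c3 c4 c5 c6 c7 c8
  · -- packing: at most 5
    intro p t ht
    obtain ⟨m, n, x, y, hx0, hx2, hy0, hy2, hE⟩ := cell_reduce p
    obtain ⟨s, hcard, -, hexcl⟩ := keycell x y hx0 hx2 hy0 hy2
    have hsub : t ⊆ s.image (fun z => (z.1 + n, z.2 + m)) := by
      intro i hi
      have hint := ht i hi
      have heq : ((i.1 - n + n, i.2 - m + m) : ℤ × ℤ) = i := by
        simp
      rw [← heq, hE (i.1 - n) (i.2 - m)] at hint
      have hstrict := interior_strict hint
      by_contra hnot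
      refine hexcl (i.1 - n) (i.2 - m) ?_ hstrict
      intro hmem
      exact hnot (Finset.mem_image.mpr ⟨(i.1 - n, i.2 - m), hmem, by simpa using heq⟩)
    calc t.card ≤ (s.image (fun z : ℤ × ℤ => (z.1 + n, z.2 + m))).card := Finset.card_le_card hsub
      _ ≤ s.card := Finset.card_image_le
      _ = 5 := hcard
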